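/- Fix a time period t ∈ {1, …, T} and two real numbers s′ and s″. The set { (x*_{·,t}, y*_{·,t}) ∈ ℝ^V × ℝ^V : (x*, y*, w*, z*, s*) is an extreme point of P with s*_{t−1} = s″ and s*_t = s′ } has cardinality at most 2V·3^{2V−1} + V²·3^{2V−2} (here s*_{t−1} denotes the fixed initial stock s₀ when t = 1). -/

import Mathlib

open scoped BigOperators

/-- A point of the warehouse problem: purchases `x`, sales `y`,
purchase indicators `w`, sale indicators `z` (all indexed by vendor and time),
and stock levels `s` (indexed by time). -/
abbrev WPoint (V T : ℕ) :=
  (Fin V → Fin T → ℝ) × (Fin V → Fin T → ℝ) × (Fin V → Fin T → ℝ) ×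
    (Fin V → Fin T → ℝ) × (Fin T → ℝ)

namespace WPoint

variable {V T : ℕ}

def x (p : WPoint V T) : Fin V → Fin T → ℝ := p.1
def y (p : WPoint V T) : Fin V → Fin T → ℝ := p.2.1
def w (p : WPoint V T) : Fin V → Fin T → ℝ := p.2.2.1
def z (p : WPoint V T) : Fin V → Fin T → ℝ := p.2.2.2.1
def s (p : WPoint V T) : Fin T → ℝ := p.2.2.2.2

end WPoint

/-- A selector of one of the `x`/`y` decision variables. -/
structure WVar (V T : ℕ) where
  isX : Bool
  v : Fin V
  t : Fin T

/-- The value of the selected variable. -/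
def WVar.val {V T : ℕ} (x y : Fin V → Fin T → ℝ) (u : WVar V T) : ℝ :=
  if u.isX then x u.v u.t else y u.v u.t

/-- The lower bound of the selected variable. -/
def WVar.lb {V T : ℕ} (Lx Ly : Fin V → Fin T → ℝ) (u : WVar V T) : ℝ :=
  if u.isX then Lx u.v u.t else Ly u.v u.t

/-- The upper bound of the selected variable. -/
def WVar.ub {V T : ℕ} (Ux Uy : Fin V → Fin T → ℝ) (u : WVar V T) : ℝ :=
  if u.isX then Ux u.v u.t else Uy u.v u.t

/-- A generalized complementarity constraint `(V₁ - B₁)(V₂ - B₂) = 0`. -/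
structure CompCon (V T : ℕ) where
  V1 : WVar V T
  V2 : WVar V T
  B1 : ℝ
  B2 : ℝ

/-- Validity of a complementarity tuple: the time index of `V₁` is at most that of `V₂`,
and each constant is zero or the lower or upper bound of the corresponding variable. -/
def ValidCompCon {V T : ℕ} (Lx Ux Ly Uy : Fin V → Fin T → ℝ) (c : CompCon V T) : Prop :=
  c.V1.t ≤ c.V2.t ∧
  (c.B1 = 0 ∨ c.B1 = c.V1.lb Lx Ly ∨ c.B1 = c.V1.ub Ux Uy) ∧
  (c.B2 = 0 ∨ c.B2 = c.V2.lb Lx Ly ∨ c.B2 = c.V2.ub Ux Uy)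

/-- The stock level at the end of period `t - 1` (the initial stock `s0` when `t = 1`). -/
def prevStock {T : ℕ} (s0 : ℝ) (s : Fin T → ℝ) (t : Fin T) : ℝ :=
  if _ : (t : ℕ) = 0 then s0 else s ⟨(t : ℕ) - 1, lt_of_le_of_lt (Nat.sub_le _ _) t.isLt⟩

/-- The feasible region `Q` of the warehouse problem. -/
def Qset {V T : ℕ} (s0 : ℝ) (Ls Us : Fin T → ℝ) (Lx Ux Ly Uy : Fin V → Fin T → ℝ)
    (C : Finset (CompCon V T)) : Set (WPoint V T) :=
  { p | (∀ t, p.s t = prevStock s0 p.s t - ∑ v, p.y v t + ∑ v, p.x v t) ∧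
        (∀ t, Ls t ≤ p.s t ∧ p.s t ≤ Us t) ∧
        (∀ t, ∑ v, p.y v t ≤ prevStock s0 p.s t) ∧
        (∀ c ∈ C, (c.V1.val p.x p.y - c.B1) * (c.V2.val p.x p.y - c.B2) = 0) ∧
        (∀ v t, Ly v t * p.z v t ≤ p.y v t ∧ p.y v t ≤ Uy v t * p.z v t) ∧
        (∀ v t, Lx v t * p.w v t ≤ p.x v t ∧ p.x v t ≤ Ux v t * p.w v t) ∧
        (∀ v t, p.w v t = 0 ∨ p.w v t = 1) ∧
        (∀ v t, p.z v t = 0 ∨ p.z v t = 1) }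

/-- The set `S` of candidate extreme stock levels. -/
def Sset {V T : ℕ} (s0 : ℝ) (Ls Us : Fin T → ℝ) (Lx Ux Ly Uy : Fin V → Fin T → ℝ) :
    Set ℝ :=
  { r | ∃ (K : ℝ) (lam : Fin 4 → Fin V → Fin T → ℝ),
      (K = 0 ∨ K = s0 ∨ (∃ t, K = Ls t) ∨ (∃ t, K = Us t)) ∧
      (∀ j v t, lam j v t = -1 ∨ lam j v t = 0 ∨ lam j v t = 1) ∧
      r = K - ∑ t, ∑ v,
        (lam 0 v t * Ly v t + lam 1 v t * Uy v t + lam 2 v t * Lx v t + lam 3 v t * Ux v t) }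

namespace WExtreme

variable {V T : ℕ}

/-- Perturb the `x` and `y` variables at time `t` by `d` and `e`. -/
def updXY (p : WPoint V T) (t : Fin T) (d e : Fin V → ℝ) : WPoint V T :=
  ⟨fun v t' => if t' = t then p.1 v t' + d v else p.1 v t',
   fun v t' => if t' = t then p.2.1 v t' + e v else p.2.1 v t',
   p.2.2.1, p.2.2.2.1, p.2.2.2.2⟩

@[simp] lemma updXY_x (p : WPoint V T) (t : Fin T) (d e : Fin V → ℝ) (v : Fin V) (t' : Fin T) :
    (updXY p t d e).x v t' = if t' = t then p.x v t' + d v else p.x v t' := rfl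
@[simp] lemma updXY_y (p : WPoint V T) (t : Fin T) (d e : Fin V → ℝ) (v : Fin V) (t' : Fin T) :
    (updXY p t d e).y v t' = if t' = t then p.y v t' + e v else p.y v t' := rfl
@[simp] lemma updXY_w (p : WPoint V T) (t : Fin T) (d e : Fin V → ℝ) :
    (updXY p t d e).w = p.w := rfl
@[simp] lemma updXY_z (p : WPoint V T) (t : Fin T) (d e : Fin V → ℝ) :
    (updXY p t d e).z = p.z := rfl
@[simp] lemma updXY_s (p : WPoint V T) (t : Fin T) (d e : Fin V → ℝ) :
    (updXY p t d e).s = p.s := rfl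

/-- "Free" coordinates: not at 0, lower, or upper bound. -/
def FreeX (Lx Ux : Fin V → Fin T → ℝ) (p : WPoint V T) (t : Fin T) (v : Fin V) : Prop :=
  p.x v t ≠ 0 ∧ p.x v t ≠ Lx v t ∧ p.x v t ≠ Ux v t
def FreeY (Ly Uy : Fin V → Fin T → ℝ) (p : WPoint V T) (t : Fin T) (v : Fin V) : Prop :=
  p.y v t ≠ 0 ∧ p.y v t ≠ Ly v t ∧ p.y v t ≠ Uy v t

lemma mem_Qset_updXY {s0 : ℝ} {Ls Us : Fin T → ℝ} {Lx Ux Ly Uy : Fin V → Fin T → ℝ}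
    {C : Finset (CompCon V T)} {p : WPoint V T} (hp : p ∈ Qset s0 Ls Us Lx Ux Ly Uy C)
    (hC : ∀ c ∈ C, ValidCompCon Lx Ux Ly Uy c)
    {t : Fin T} {d e : Fin V → ℝ}
    (hde : ∑ v, d v = ∑ v, e v)
    (hdfree : ∀ v, d v ≠ 0 → FreeX Lx Ux p t v)
    (hefree : ∀ v, e v ≠ 0 → FreeY Ly Uy p t v)
    (hdbd : ∀ v, Lx v t * p.w v t ≤ p.x v t + d v ∧ p.x v t + d v ≤ Ux v t * p.w v t)
    (hebd : ∀ v, Ly v t * p.z v t ≤ p.y v t + e v ∧ p.y v t + e v ≤ Uy v t * p.z v t)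
    (hysum : ∑ v, (p.y v t + e v) ≤ prevStock s0 p.s t) :
    updXY p t d e ∈ Qset s0 Ls Us Lx Ux Ly Uy C := by
  obtain ⟨h1, h2, h3, h4, h5, h6, h7, h8⟩ := hp
  refine ⟨?_, by simpa using h2, ?_, ?_, ?_, ?_, by simpa using h7, by simpa using h8⟩
  · intro t'
    by_cases h : t' = t
    · subst h
      simp only [updXY_s, updXY_x, updXY_y, if_pos rfl, if_true]
      rw [Finset.sum_add_distrib, Finset.sum_add_distrib, ← hde]
      linarith [h1 t']
    · simpa [updXY_s, updXY_x, updXY_y, if_neg h] using h1 t'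
  · intro t'
    by_cases h : t' = t
    · subst h
      simpa [updXY_s, updXY_y, if_pos rfl] using hysum
    · simpa [updXY_s, updXY_y, if_neg h] using h3 t'
  · intro c hc
    have h4c := h4 c hc
    obtain ⟨-, hB1, hB2⟩ := hC c hc
    rcases mul_eq_zero.1 h4c with h0 | h0
    · refine mul_eq_zero.2 (Or.inl ?_)
      rw [sub_eq_zero] at h0 ⊢
      rw [← h0]
      -- value of V1 is unchanged
      unfold WVar.val
      by_cases hx : c.V1.isX
      · simp only [if_pos hx, updXY_x]
        by_cases ht : c.V1.t = t
        · rcases eq_or_ne (d c.V1.v) 0 with hd0 | hd0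
          · simp [hd0]
          · exfalso
            have hfree := hdfree _ hd0
            rw [← ht] at hfree
            have : c.B1 ≠ p.x c.V1.v c.V1.t := by
              rcases hB1 with h | h | h
              · rw [h]; exact fun hh => hfree.1 hh.symm
              · rw [h]; unfold WVar.lb; rw [if_pos hx]; exact fun hh => hfree.2.1 hh.symm
              · rw [h]; unfold WVar.ub; rw [if_pos hx]; exact fun hh => hfree.2.2 hh.symm
            unfold WVar.val at h0
            rw [if_pos hx] at h0
            exact this h0.symm
        · simp [if_neg ht]
      · simp only [if_neg hx, updXY_y]
        by_cases ht : c.V1.t = t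
        · rcases eq_or_ne (e c.V1.v) 0 with hd0 | hd0
          · simp [hd0]
          · exfalso
            have hfree := hefree _ hd0
            rw [← ht] at hfree
            have : c.B1 ≠ p.y c.V1.v c.V1.t := by
              rcases hB1 with h | h | h
              · rw [h]; exact fun hh => hfree.1 hh.symm
              · rw [h]; unfold WVar.lb; rw [if_neg hx]; exact fun hh => hfree.2.1 hh.symm
              · rw [h]; unfold WVar.ub; rw [if_neg hx]; exact fun hh => hfree.2.2 hh.symm
            unfold WVar.val at h0
            rw [if_neg hx] at h0
            exact this h0.symm
        · simp [if_neg ht]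
    · refine mul_eq_zero.2 (Or.inr ?_)
      rw [sub_eq_zero] at h0 ⊢
      rw [← h0]
      unfold WVar.val
      by_cases hx : c.V2.isX
      · simp only [if_pos hx, updXY_x]
        by_cases ht : c.V2.t = t
        · rcases eq_or_ne (d c.V2.v) 0 with hd0 | hd0
          · simp [hd0]
          · exfalso
            have hfree := hdfree _ hd0
            rw [← ht] at hfree
            have : c.B2 ≠ p.x c.V2.v c.V2.t := by
              rcases hB2 with h | h | h
              · rw [h]; exact fun hh => hfree.1 hh.symm
              · rw [h]; unfold WVar.lb; rw [if_pos hx]; exact fun hh => hfree.2.1 hh.symm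
              · rw [h]; unfold WVar.ub; rw [if_pos hx]; exact fun hh => hfree.2.2 hh.symm
            unfold WVar.val at h0
            rw [if_pos hx] at h0
            exact this h0.symm
        · simp [if_neg ht]
      · simp only [if_neg hx, updXY_y]
        by_cases ht : c.V2.t = t
        · rcases eq_or_ne (e c.V2.v) 0 with hd0 | hd0
          · simp [hd0]
          · exfalso
            have hfree := hefree _ hd0
            rw [← ht] at hfree
            have : c.B2 ≠ p.y c.V2.v c.V2.t := by
              rcases hB2 with h | h | h
              · rw [h]; exact fun hh => hfree.1 hh.symm
              · rw [h]; unfold WVar.lb; rw [if_neg hx]; exact fun hh => hfree.2.1 hh.symm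
              · rw [h]; unfold WVar.ub; rw [if_neg hx]; exact fun hh => hfree.2.2 hh.symm
            unfold WVar.val at h0
            rw [if_neg hx] at h0
            exact this h0.symm
        · simp [if_neg ht]
  · intro v t'
    by_cases h : t' = t
    · subst h
      simpa [updXY_y, updXY_z, if_pos rfl] using hebd v
    · simpa [updXY_y, updXY_z, if_neg h] using h5 v t'
  · intro v t'
    by_cases h : t' = t
    · subst h
      simpa [updXY_x, updXY_w, if_pos rfl] using hdbd v
    · simpa [updXY_x, updXY_w, if_neg h] using h6 v t'



section PertZero

variable {s0 : ℝ} {Ls Us : Fin T → ℝ} {Lx Ux Ly Uy : Fin V → Fin T → ℝ}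
  {C : Finset (CompCon V T)}

lemma pert_zero {p : WPoint V T}
    (hext : p ∈ Set.extremePoints ℝ (convexHull ℝ (Qset s0 Ls Us Lx Ux Ly Uy C)))
    {t : Fin T} {d e : Fin V → ℝ}
    (hq1 : updXY p t d e ∈ Qset s0 Ls Us Lx Ux Ly Uy C)
    (hq2 : updXY p t (-d) (-e) ∈ Qset s0 Ls Us Lx Ux Ly Uy C) :
    d = 0 ∧ e = 0 := by
  have key : (1/2:ℝ) • updXY p t d e + (1/2:ℝ) • updXY p t (-d) (-e) = p := by
    unfold updXY
    refine Prod.ext ?_ (Prod.ext ?_ (Prod.ext ?_ (Prod.ext ?_ ?_))) <;>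
      simp only [Prod.fst_add, Prod.snd_add, Prod.smul_fst, Prod.smul_snd]
    · funext v t'
      by_cases h : t' = t <;> simp [h] <;> ring
    · funext v t'
      by_cases h : t' = t <;> simp [h] <;> ring
    · funext v t'; simp; ring
    · funext v t'; simp; ring
    · funext t'; simp; ring
  have hseg : p ∈ openSegment ℝ (updXY p t d e) (updXY p t (-d) (-e)) :=
    ⟨1/2, 1/2, by norm_num, by norm_num, by norm_num, key⟩
  have heq := (hext.2 (subset_convexHull ℝ _ hq1) (subset_convexHull ℝ _ hq2) hseg)
  constructor <;> funext v
  · have := congrFun (congrFun (congrArg Prod.fst heq) v) t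
    simpa [updXY] using this
  · have := congrFun (congrFun (congrArg (fun q : WPoint V T => q.2.1) heq) v) t
    simpa [updXY] using this


lemma pert_zero₂ {p : WPoint V T}
    (hext : p ∈ Set.extremePoints ℝ (convexHull ℝ (Qset s0 Ls Us Lx Ux Ly Uy C)))
    (hQ : p ∈ Qset s0 Ls Us Lx Ux Ly Uy C)
    (hC : ∀ c ∈ C, ValidCompCon Lx Ux Ly Uy c)
    {t : Fin T} {d e : Fin V → ℝ}
    (hde : ∑ v, d v = ∑ v, e v)
    (hdfree : ∀ v, d v ≠ 0 → FreeX Lx Ux p t v)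
    (hefree : ∀ v, e v ≠ 0 → FreeY Ly Uy p t v)
    (hdbd : ∀ v, Lx v t * p.w v t ≤ p.x v t - |d v| ∧ p.x v t + |d v| ≤ Ux v t * p.w v t)
    (hebd : ∀ v, Ly v t * p.z v t ≤ p.y v t - |e v| ∧ p.y v t + |e v| ≤ Uy v t * p.z v t)
    (hysum : (∑ v, p.y v t) + |∑ v, e v| ≤ prevStock s0 p.s t) :
    d = 0 ∧ e = 0 := by
  refine pert_zero (t := t) hext ?_ ?_
  · refine mem_Qset_updXY hQ hC hde hdfree hefree ?_ ?_ ?_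
    · intro v
      constructor
      · linarith [(hdbd v).1, neg_abs_le (d v)]
      · linarith [(hdbd v).2, le_abs_self (d v)]
    · intro v
      constructor
      · linarith [(hebd v).1, neg_abs_le (e v)]
      · linarith [(hebd v).2, le_abs_self (e v)]
    · rw [Finset.sum_add_distrib]
      linarith [le_abs_self (∑ v, e v)]
  · have hde' : ∑ v, (-d) v = ∑ v, (-e) v := by
      simp only [Pi.neg_apply, Finset.sum_neg_distrib]
      exact congrArg Neg.neg hde
    refine mem_Qset_updXY hQ hC hde' (fun v hv => hdfree v (by simpa using hv))
      (fun v hv => hefree v (by simpa using hv)) ?_ ?_ ?_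
    · intro v
      constructor
      · have := (hdbd v).1; simp only [Pi.neg_apply]
        linarith [neg_abs_le (d v), le_abs_self (d v)]
      · have := (hdbd v).2; simp only [Pi.neg_apply]
        linarith [neg_abs_le (d v), le_abs_self (d v)]
    · intro v
      constructor
      · have := (hebd v).1; simp only [Pi.neg_apply]
        linarith [neg_abs_le (e v), le_abs_self (e v)]
      · have := (hebd v).2; simp only [Pi.neg_apply]
        linarith [neg_abs_le (e v), le_abs_self (e v)]
    · simp only [Pi.neg_apply]
      rw [Finset.sum_add_distrib, Finset.sum_neg_distrib]
      have : -∑ v, e v ≤ |∑ v, e v| := neg_le_abs _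
      linarith

lemma freeX_strict {p : WPoint V T} (hQ : p ∈ Qset s0 Ls Us Lx Ux Ly Uy C)
    {t : Fin T} {v : Fin V} (h : FreeX Lx Ux p t v) :
    p.w v t = 1 ∧ Lx v t < p.x v t ∧ p.x v t < Ux v t := by
  obtain ⟨-, -, -, -, -, h6, h7, -⟩ := hQ
  have hw : p.w v t = 1 := by
    rcases h7 v t with hw | hw
    · exfalso
      apply h.1
      have h1 := (h6 v t).1
      have h2 := (h6 v t).2
      rw [hw] at h1 h2
      simp at h1 h2
      linarith
    · exact hw
  refine ⟨hw, ?_, ?_⟩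
  · have := (h6 v t).1; rw [hw] at this; simp at this
    exact lt_of_le_of_ne this (Ne.symm h.2.1)
  · have := (h6 v t).2; rw [hw] at this; simp at this
    exact lt_of_le_of_ne this h.2.2

lemma freeY_strict {p : WPoint V T} (hQ : p ∈ Qset s0 Ls Us Lx Ux Ly Uy C)
    {t : Fin T} {v : Fin V} (h : FreeY Ly Uy p t v) :
    p.z v t = 1 ∧ Ly v t < p.y v t ∧ p.y v t < Uy v t := by
  obtain ⟨-, -, -, -, h5, -, -, h8⟩ := hQ
  have hw : p.z v t = 1 := by
    rcases h8 v t with hw | hw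
    · exfalso
      apply h.1
      have h1 := (h5 v t).1
      have h2 := (h5 v t).2
      rw [hw] at h1 h2
      simp at h1 h2
      linarith
    · exact hw
  refine ⟨hw, ?_, ?_⟩
  · have := (h5 v t).1; rw [hw] at this; simp at this
    exact lt_of_le_of_ne this (Ne.symm h.2.1)
  · have := (h5 v t).2; rw [hw] at this; simp at this
    exact lt_of_le_of_ne this h.2.2

lemma not_two_freeX {p : WPoint V T}
    (hext : p ∈ Set.extremePoints ℝ (convexHull ℝ (Qset s0 Ls Us Lx Ux Ly Uy C)))
    (hQ : p ∈ Qset s0 Ls Us Lx Ux Ly Uy C)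
    (hC : ∀ c ∈ C, ValidCompCon Lx Ux Ly Uy c)
    {t : Fin T} {v₁ v₂ : Fin V} (hne : v₁ ≠ v₂)
    (h₁ : FreeX Lx Ux p t v₁) (h₂ : FreeX Lx Ux p t v₂) : False := by
  obtain ⟨hw₁, hl₁, hu₁⟩ := freeX_strict hQ h₁
  obtain ⟨hw₂, hl₂, hu₂⟩ := freeX_strict hQ h₂
  set δ := min (min (p.x v₁ t - Lx v₁ t) (Ux v₁ t - p.x v₁ t))
      (min (p.x v₂ t - Lx v₂ t) (Ux v₂ t - p.x v₂ t)) with hδdef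
  have hδ : 0 < δ := by
    simp only [hδdef, lt_min_iff]
    refine ⟨⟨by linarith, by linarith⟩, ⟨by linarith, by linarith⟩⟩
  have hδ1 : δ ≤ p.x v₁ t - Lx v₁ t := le_trans (min_le_left _ _) (min_le_left _ _)
  have hδ2 : δ ≤ Ux v₁ t - p.x v₁ t := le_trans (min_le_left _ _) (min_le_right _ _)
  have hδ3 : δ ≤ p.x v₂ t - Lx v₂ t := le_trans (min_le_right _ _) (min_le_left _ _)
  have hδ4 : δ ≤ Ux v₂ t - p.x v₂ t := le_trans (min_le_right _ _) (min_le_right _ _)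
  set d : Fin V → ℝ := fun v => (if v = v₁ then δ else 0) + (if v = v₂ then -δ else 0) with hd
  obtain ⟨h1, h2, h3, h4, h5, h6, h7, h8⟩ := hQ
  have key := pert_zero₂ (t := t) (d := d) (e := 0) hext
    ⟨h1, h2, h3, h4, h5, h6, h7, h8⟩ hC
    (by simp [hd, Finset.sum_add_distrib, Finset.sum_ite_eq'])
    (by
      intro v hv
      rcases eq_or_ne v v₁ with rfl | hv1
      · exact h₁
      rcases eq_or_ne v v₂ with rfl | hv2
      · exact h₂
      simp [hd, hv1, hv2] at hv)
    (by simp)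
    (by
      intro v
      rcases eq_or_ne v v₁ with rfl | hv1
      · have : d v = δ := by simp [hd, hne]
        rw [this, abs_of_pos hδ, hw₁]
        constructor <;> linarith
      rcases eq_or_ne v v₂ with rfl | hv2
      · have : d v = -δ := by simp [hd, Ne.symm hne]
        rw [this, abs_neg, abs_of_pos hδ, hw₂]
        constructor <;> linarith
      · have : d v = 0 := by simp [hd, hv1, hv2]
        rw [this]
        simpa using h6 v t)
    (by intro v; simpa using h5 v t)
    (by simpa using h3 t)
  have := congrFun key.1 v₁
  simp [hd, hne] at this
  exact absurd this (ne_of_gt hδ)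

lemma not_two_freeY {p : WPoint V T}
    (hext : p ∈ Set.extremePoints ℝ (convexHull ℝ (Qset s0 Ls Us Lx Ux Ly Uy C)))
    (hQ : p ∈ Qset s0 Ls Us Lx Ux Ly Uy C)
    (hC : ∀ c ∈ C, ValidCompCon Lx Ux Ly Uy c)
    {t : Fin T} {v₁ v₂ : Fin V} (hne : v₁ ≠ v₂)
    (h₁ : FreeY Ly Uy p t v₁) (h₂ : FreeY Ly Uy p t v₂) : False := by
  obtain ⟨hw₁, hl₁, hu₁⟩ := freeY_strict hQ h₁
  obtain ⟨hw₂, hl₂, hu₂⟩ := freeY_strict hQ h₂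
  set δ := min (min (p.y v₁ t - Ly v₁ t) (Uy v₁ t - p.y v₁ t))
      (min (p.y v₂ t - Ly v₂ t) (Uy v₂ t - p.y v₂ t)) with hδdef
  have hδ : 0 < δ := by
    simp only [hδdef, lt_min_iff]
    refine ⟨⟨by linarith, by linarith⟩, ⟨by linarith, by linarith⟩⟩
  have hδ1 : δ ≤ p.y v₁ t - Ly v₁ t := le_trans (min_le_left _ _) (min_le_left _ _)
  have hδ2 : δ ≤ Uy v₁ t - p.y v₁ t := le_trans (min_le_left _ _) (min_le_right _ _)
  have hδ3 : δ ≤ p.y v₂ t - Ly v₂ t := le_trans (min_le_right _ _) (min_le_left _ _)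
  have hδ4 : δ ≤ Uy v₂ t - p.y v₂ t := le_trans (min_le_right _ _) (min_le_right _ _)
  set e : Fin V → ℝ := fun v => (if v = v₁ then δ else 0) + (if v = v₂ then -δ else 0) with hd
  obtain ⟨h1, h2, h3, h4, h5, h6, h7, h8⟩ := hQ
  have key := pert_zero₂ (t := t) (d := 0) (e := e) hext
    ⟨h1, h2, h3, h4, h5, h6, h7, h8⟩ hC
    (by simp [hd, Finset.sum_add_distrib, Finset.sum_ite_eq'])
    (by simp)
    (by
      intro v hv
      rcases eq_or_ne v v₁ with rfl | hv1
      · exact h₁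
      rcases eq_or_ne v v₂ with rfl | hv2
      · exact h₂
      simp [hd, hv1, hv2] at hv)
    (by intro v; simpa using h6 v t)
    (by
      intro v
      rcases eq_or_ne v v₁ with rfl | hv1
      · have : e v = δ := by simp [hd, hne]
        rw [this, abs_of_pos hδ, hw₁]
        constructor <;> linarith
      rcases eq_or_ne v v₂ with rfl | hv2
      · have : e v = -δ := by simp [hd, Ne.symm hne]
        rw [this, abs_neg, abs_of_pos hδ, hw₂]
        constructor <;> linarith
      · have : e v = 0 := by simp [hd, hv1, hv2]
        rw [this]
        simpa using h5 v t)
    (by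
      have : ∑ v, e v = 0 := by simp [hd, Finset.sum_add_distrib, Finset.sum_ite_eq']
      rw [this]
      simpa using h3 t)
  have := congrFun key.2 v₁
  simp [hd, hne] at this
  exact absurd this (ne_of_gt hδ)

lemma freeXY_tight {p : WPoint V T}
    (hext : p ∈ Set.extremePoints ℝ (convexHull ℝ (Qset s0 Ls Us Lx Ux Ly Uy C)))
    (hQ : p ∈ Qset s0 Ls Us Lx Ux Ly Uy C)
    (hC : ∀ c ∈ C, ValidCompCon Lx Ux Ly Uy c)
    {t : Fin T} {v₁ v₂ : Fin V}
    (h₁ : FreeX Lx Ux p t v₁) (h₂ : FreeY Ly Uy p t v₂) :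
    ∑ v, p.y v t = prevStock s0 p.s t := by
  obtain ⟨hw₁, hl₁, hu₁⟩ := freeX_strict hQ h₁
  obtain ⟨hw₂, hl₂, hu₂⟩ := freeY_strict hQ h₂
  by_contra hne
  have hslack : ∑ v, p.y v t < prevStock s0 p.s t :=
    lt_of_le_of_ne (hQ.2.2.1 t) hne
  set δ := min (min (p.x v₁ t - Lx v₁ t) (Ux v₁ t - p.x v₁ t))
      (min (min (p.y v₂ t - Ly v₂ t) (Uy v₂ t - p.y v₂ t))
        (prevStock s0 p.s t - ∑ v, p.y v t)) with hδdef
  have hδ : 0 < δ := by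
    simp only [hδdef, lt_min_iff]
    refine ⟨⟨by linarith, by linarith⟩, ⟨by linarith, by linarith⟩, by linarith⟩
  have hδ1 : δ ≤ p.x v₁ t - Lx v₁ t := le_trans (min_le_left _ _) (min_le_left _ _)
  have hδ2 : δ ≤ Ux v₁ t - p.x v₁ t := le_trans (min_le_left _ _) (min_le_right _ _)
  have hδ3 : δ ≤ p.y v₂ t - Ly v₂ t :=
    le_trans (min_le_right _ _) (le_trans (min_le_left _ _) (min_le_left _ _))
  have hδ4 : δ ≤ Uy v₂ t - p.y v₂ t :=
    le_trans (min_le_right _ _) (le_trans (min_le_left _ _) (min_le_right _ _))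
  have hδ5 : δ ≤ prevStock s0 p.s t - ∑ v, p.y v t :=
    le_trans (min_le_right _ _) (min_le_right _ _)
  set d : Fin V → ℝ := fun v => if v = v₁ then δ else 0 with hd
  set e : Fin V → ℝ := fun v => if v = v₂ then δ else 0 with he
  obtain ⟨h1, h2, h3, h4, h5, h6, h7, h8⟩ := hQ
  have key := pert_zero₂ (t := t) (d := d) (e := e) hext
    ⟨h1, h2, h3, h4, h5, h6, h7, h8⟩ hC
    (by simp [hd, he, Finset.sum_ite_eq'])
    (by
      intro v hv
      rcases eq_or_ne v v₁ with rfl | hv1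
      · exact h₁
      simp [hd, hv1] at hv)
    (by
      intro v hv
      rcases eq_or_ne v v₂ with rfl | hv2
      · exact h₂
      simp [he, hv2] at hv)
    (by
      intro v
      rcases eq_or_ne v v₁ with rfl | hv1
      · have : d v = δ := by simp [hd]
        rw [this, abs_of_pos hδ, hw₁]
        constructor <;> linarith
      · have : d v = 0 := by simp [hd, hv1]
        rw [this]
        simpa using h6 v t)
    (by
      intro v
      rcases eq_or_ne v v₂ with rfl | hv2
      · have : e v = δ := by simp [he]
        rw [this, abs_of_pos hδ, hw₂]
        constructor <;> linarith
      · have : e v = 0 := by simp [he, hv2]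
        rw [this]
        simpa using h5 v t)
    (by
      have : ∑ v, e v = δ := by simp [he, Finset.sum_ite_eq']
      rw [this, abs_of_pos hδ]
      linarith)
  have := congrFun key.1 v₁
  simp [hd] at this
  exact absurd this (ne_of_gt hδ)

end PertZero

section Encode

variable {V : ℕ}

abbrev EType (V : ℕ) :=
  (Σ _i : Fin V ⊕ Fin V, ({k : Fin V ⊕ Fin V // k ≠ _i} → Fin 3)) ⊕
  (Σ ij : Fin V × Fin V,
    ({k : Fin V ⊕ Fin V // k ≠ Sum.inl ij.1 ∧ k ≠ Sum.inr ij.2} → Fin 3))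

def IsFreeC (lo hi c : Fin V ⊕ Fin V → ℝ) (k : Fin V ⊕ Fin V) : Prop :=
  c k ≠ 0 ∧ c k ≠ lo k ∧ c k ≠ hi k

open Classical in
noncomputable def tagOf (lo hi c : Fin V ⊕ Fin V → ℝ) (k : Fin V ⊕ Fin V) : Fin 3 :=
  if c k = 0 then 0 else if c k = lo k then 1 else 2

lemma decode_tagOf {lo hi c : Fin V ⊕ Fin V → ℝ} {k : Fin V ⊕ Fin V}
    (h : ¬ IsFreeC lo hi c k) : ![0, lo k, hi k] (tagOf lo hi c k) = c k := by
  unfold tagOf IsFreeC at *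
  split_ifs with h1 h2
  · simpa using h1.symm
  · simpa using h2.symm
  · have : c k = hi k := by tauto
    simpa using this.symm

open Classical in
noncomputable def pivot (hV : 0 < V) (lo hi c : Fin V ⊕ Fin V → ℝ) : Fin V ⊕ Fin V :=
  if hx : ∃ v, IsFreeC lo hi c (.inl v) then .inl hx.choose
  else if hy : ∃ v, IsFreeC lo hi c (.inr v) then .inr hy.choose
  else .inl ⟨0, hV⟩

open Classical in
noncomputable def encode (hV : 0 < V) (lo hi c : Fin V ⊕ Fin V → ℝ) : EType V :=
  if h : (∃ v, IsFreeC lo hi c (.inl v)) ∧ (∃ v, IsFreeC lo hi c (.inr v)) then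
    .inr ⟨(h.1.choose, h.2.choose), fun k => tagOf lo hi c k.1⟩
  else
    .inl ⟨pivot hV lo hi c, fun k => tagOf lo hi c k.1⟩

lemma pivot_nonfree {hV : 0 < V} {lo hi c : Fin V ⊕ Fin V → ℝ}
    (hX : ∀ u u', IsFreeC lo hi c (.inl u) → IsFreeC lo hi c (.inl u') → u = u')
    (hY : ∀ u u', IsFreeC lo hi c (.inr u) → IsFreeC lo hi c (.inr u') → u = u')
    (hb : ¬ ((∃ v, IsFreeC lo hi c (.inl v)) ∧ (∃ v, IsFreeC lo hi c (.inr v))))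
    {k : Fin V ⊕ Fin V} (hk : k ≠ pivot hV lo hi c) : ¬ IsFreeC lo hi c k := by
  intro hfree
  unfold pivot at hk
  split_ifs at hk with h1 h2
  · cases k with
    | inl u => exact hk (by rw [hX u h1.choose hfree h1.choose_spec])
    | inr u => exact hb ⟨h1, ⟨u, hfree⟩⟩
  · cases k with
    | inl u => exact h1 ⟨u, hfree⟩
    | inr u => exact hk (by rw [hY u h2.choose hfree h2.choose_spec])
  · cases k with
    | inl u => exact h1 ⟨u, hfree⟩
    | inr u => exact h2 ⟨u, hfree⟩

lemma encode_inj (hV : 0 < V) (lo hi : Fin V ⊕ Fin V → ℝ) (s' s'' : ℝ)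
    {c c' : Fin V ⊕ Fin V → ℝ}
    (hX : ∀ u u', IsFreeC lo hi c (.inl u) → IsFreeC lo hi c (.inl u') → u = u')
    (hY : ∀ u u', IsFreeC lo hi c (.inr u) → IsFreeC lo hi c (.inr u') → u = u')
    (hT : (∃ u, IsFreeC lo hi c (.inl u)) → (∃ u, IsFreeC lo hi c (.inr u)) →
      ∑ v, c (.inr v) = s'')
    (hBal : s' = s'' - ∑ v, c (.inr v) + ∑ v, c (.inl v))
    (hX' : ∀ u u', IsFreeC lo hi c' (.inl u) → IsFreeC lo hi c' (.inl u') → u = u')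
    (hY' : ∀ u u', IsFreeC lo hi c' (.inr u) → IsFreeC lo hi c' (.inr u') → u = u')
    (hT' : (∃ u, IsFreeC lo hi c' (.inl u)) → (∃ u, IsFreeC lo hi c' (.inr u)) →
      ∑ v, c' (.inr v) = s'')
    (hBal' : s' = s'' - ∑ v, c' (.inr v) + ∑ v, c' (.inl v))
    (h : encode hV lo hi c = encode hV lo hi c') : c = c' := by
  classical
  by_cases hb : (∃ v, IsFreeC lo hi c (.inl v)) ∧ (∃ v, IsFreeC lo hi c (.inr v)) <;>
    by_cases hb' : (∃ v, IsFreeC lo hi c' (.inl v)) ∧ (∃ v, IsFreeC lo hi c' (.inr v))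
  · -- both Right
    unfold encode at h
    rw [dif_pos hb, dif_pos hb'] at h
    set i := hb.1.choose with hidef
    set j := hb.2.choose with hjdef
    set i' := hb'.1.choose with hidef'
    set j' := hb'.2.choose with hjdef'
    have hspeci : IsFreeC lo hi c (.inl i) := hb.1.choose_spec
    have hspecj : IsFreeC lo hi c (.inr j) := hb.2.choose_spec
    have hspeci' : IsFreeC lo hi c' (.inl i') := hb'.1.choose_spec
    have hspecj' : IsFreeC lo hi c' (.inr j') := hb'.2.choose_spec
    clear_value i j i' j'
    have hsig := Sum.inr.inj h
    have hfst := congrArg Sigma.fst hsig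
    simp only at hfst
    obtain ⟨hii, hjj⟩ := Prod.mk.inj hfst
    subst hii hjj
    have hsnd := eq_of_heq (Sigma.mk.inj_iff.mp hsig).2
    have htag : ∀ k (hk : k ≠ Sum.inl i ∧ k ≠ Sum.inr j),
        tagOf lo hi c k = tagOf lo hi c' k := fun k hk => congrFun hsnd ⟨k, hk⟩
    have hnf : ∀ k, k ≠ Sum.inl i → k ≠ Sum.inr j → ¬ IsFreeC lo hi c k := by
      rintro (u | u) hk1 hk2 hfree
      · exact hk1 (by rw [hX u i hfree hspeci])
      · exact hk2 (by rw [hY u j hfree hspecj])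
    have hnf' : ∀ k, k ≠ Sum.inl i → k ≠ Sum.inr j → ¬ IsFreeC lo hi c' k := by
      rintro (u | u) hk1 hk2 hfree
      · exact hk1 (by rw [hX' u i hfree hspeci'])
      · exact hk2 (by rw [hY' u j hfree hspecj'])
    have hceq : ∀ k, k ≠ Sum.inl i → k ≠ Sum.inr j → c k = c' k := by
      intro k hk1 hk2
      rw [← decode_tagOf (hnf k hk1 hk2), ← decode_tagOf (hnf' k hk1 hk2),
        htag k ⟨hk1, hk2⟩]
    have hsumy : ∑ v, c (.inr v) = s'' := hT hb.1 hb.2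
    have hsumy' : ∑ v, c' (.inr v) = s'' := hT' hb'.1 hb'.2
    have heraseY : ∑ u ∈ Finset.univ.erase j, c (.inr u) =
        ∑ u ∈ Finset.univ.erase j, c' (.inr u) :=
      Finset.sum_congr rfl fun u hu =>
        hceq _ (by simp) (by simp [Finset.ne_of_mem_erase hu])
    have hbj : c (.inr j) = c' (.inr j) := by
      have e1 := Finset.add_sum_erase Finset.univ (fun u => c (.inr u)) (Finset.mem_univ j)
      have e2 := Finset.add_sum_erase Finset.univ (fun u => c' (.inr u)) (Finset.mem_univ j)
      rw [hsumy] at e1; rw [hsumy'] at e2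
      linarith [heraseY]
    have hyeq : ∀ u, c (.inr u) = c' (.inr u) := by
      intro u
      rcases eq_or_ne u j with rfl | hu
      · exact hbj
      · exact hceq _ (by simp) (by simp [hu])
    have heraseX : ∑ u ∈ Finset.univ.erase i, c (.inl u) =
        ∑ u ∈ Finset.univ.erase i, c' (.inl u) :=
      Finset.sum_congr rfl fun u hu =>
        hceq _ (by simp [Finset.ne_of_mem_erase hu]) (by simp)
    have hsx : ∑ v, c (.inl v) = ∑ v, c' (.inl v) := by
      have : ∑ v, c (.inr v) = ∑ v, c' (.inr v) := by rw [hsumy, hsumy']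
      linarith [hBal, hBal']
    have hai : c (.inl i) = c' (.inl i) := by
      have e1 := Finset.add_sum_erase Finset.univ (fun u => c (.inl u)) (Finset.mem_univ i)
      have e2 := Finset.add_sum_erase Finset.univ (fun u => c' (.inl u)) (Finset.mem_univ i)
      linarith [heraseX, hsx]
    funext k
    rcases k with u | u
    · rcases eq_or_ne u i with rfl | hu
      · exact hai
      · exact hceq _ (by simp [hu]) (by simp)
    · exact hyeq u
  · unfold encode at h
    rw [dif_pos hb, dif_neg hb'] at h
    exact absurd h (by simp)
  · unfold encode at h
    rw [dif_neg hb, dif_pos hb'] at h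
    exact absurd h (by simp)
  · -- both Left
    unfold encode at h
    rw [dif_neg hb, dif_neg hb'] at h
    have hsig := Sum.inl.inj h
    have hfst := congrArg Sigma.fst hsig
    simp only at hfst
    have hnf : ∀ k, k ≠ pivot hV lo hi c → ¬ IsFreeC lo hi c k :=
      fun k hk => pivot_nonfree hX hY hb hk
    have hnf' : ∀ k, k ≠ pivot hV lo hi c → ¬ IsFreeC lo hi c' k := by
      intro k hk
      rw [hfst] at hk
      exact pivot_nonfree hX' hY' hb' hk
    set i := pivot hV lo hi c with hidef
    set i' := pivot hV lo hi c' with hidef'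
    clear_value i i'
    subst hfst
    have hsnd := eq_of_heq (Sigma.mk.inj_iff.mp hsig).2
    have hceq : ∀ k, k ≠ i → c k = c' k := by
      intro k hk
      rw [← decode_tagOf (hnf k hk), ← decode_tagOf (hnf' k hk)]
      exact congrArg _ (congrFun hsnd ⟨k, hk⟩)
    rcases i with v | v
    · -- pivot is an x-coordinate
      have hyeq : ∀ u, c (.inr u) = c' (.inr u) := fun u => hceq _ (by simp)
      have hsy : ∑ u, c (.inr u) = ∑ u, c' (.inr u) := Finset.sum_congr rfl fun u _ => hyeq u
      have hsx : ∑ u, c (.inl u) = ∑ u, c' (.inl u) := by linarith [hBal, hBal']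
      have heraseX : ∑ u ∈ Finset.univ.erase v, c (.inl u) =
          ∑ u ∈ Finset.univ.erase v, c' (.inl u) :=
        Finset.sum_congr rfl fun u hu => hceq _ (by simp [Finset.ne_of_mem_erase hu])
      have hav : c (.inl v) = c' (.inl v) := by
        have e1 := Finset.add_sum_erase Finset.univ (fun u => c (.inl u)) (Finset.mem_univ v)
        have e2 := Finset.add_sum_erase Finset.univ (fun u => c' (.inl u)) (Finset.mem_univ v)
        linarith [heraseX, hsx]
      funext k
      rcases k with u | u
      · rcases eq_or_ne u v with rfl | hu
        · exact hav
        · exact hceq _ (by simp [hu])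
      · exact hyeq u
    · -- pivot is a y-coordinate
      have hxeq : ∀ u, c (.inl u) = c' (.inl u) := fun u => hceq _ (by simp)
      have hsx : ∑ u, c (.inl u) = ∑ u, c' (.inl u) := Finset.sum_congr rfl fun u _ => hxeq u
      have hsy : ∑ u, c (.inr u) = ∑ u, c' (.inr u) := by linarith [hBal, hBal']
      have heraseY : ∑ u ∈ Finset.univ.erase v, c (.inr u) =
          ∑ u ∈ Finset.univ.erase v, c' (.inr u) :=
        Finset.sum_congr rfl fun u hu => hceq _ (by simp [Finset.ne_of_mem_erase hu])
      have hbv : c (.inr v) = c' (.inr v) := by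
        have e1 := Finset.add_sum_erase Finset.univ (fun u => c (.inr u)) (Finset.mem_univ v)
        have e2 := Finset.add_sum_erase Finset.univ (fun u => c' (.inr u)) (Finset.mem_univ v)
        linarith [heraseY, hsy]
      funext k
      rcases k with u | u
      · exact hxeq u
      · rcases eq_or_ne u v with rfl | hu
        · exact hbv
        · exact hceq _ (by simp [hu])

lemma card_subtype_ne {α : Type*} [Fintype α] [DecidableEq α] (a : α) :
    Fintype.card {k : α // k ≠ a} = Fintype.card α - 1 := by
  rw [Fintype.card_subtype]
  have : Finset.univ.filter (fun k => k ≠ a) = Finset.univ \ {a} := by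
    ext k; simp
  rw [this, Finset.card_sdiff_of_subset (by simp)]
  simp

lemma card_subtype_ne₂ {α : Type*} [Fintype α] [DecidableEq α] {a b : α} (hab : a ≠ b) :
    Fintype.card {k : α // k ≠ a ∧ k ≠ b} = Fintype.card α - 2 := by
  rw [Fintype.card_subtype]
  have : Finset.univ.filter (fun k => k ≠ a ∧ k ≠ b) = Finset.univ \ {a, b} := by
    ext k; simp
  rw [this, Finset.card_sdiff_of_subset (by simp)]
  rw [Finset.card_univ, Finset.card_pair hab]

lemma card_EType (V : ℕ) :
    Fintype.card (EType V) = 2 * V * 3 ^ (2 * V - 1) + V ^ 2 * 3 ^ (2 * V - 2) := by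
  classical
  rw [Fintype.card_sum, Fintype.card_sigma, Fintype.card_sigma]
  have h1 : ∀ i : Fin V ⊕ Fin V,
      Fintype.card ({k : Fin V ⊕ Fin V // k ≠ i} → Fin 3) = 3 ^ (2 * V - 1) := by
    intro i
    rw [Fintype.card_fun, card_subtype_ne, Fintype.card_sum, Fintype.card_fin,
      Fintype.card_fin]
    ring_nf
  have h2 : ∀ ij : Fin V × Fin V,
      Fintype.card ({k : Fin V ⊕ Fin V // k ≠ Sum.inl ij.1 ∧ k ≠ Sum.inr ij.2} → Fin 3) =
        3 ^ (2 * V - 2) := by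
    intro ij
    rw [Fintype.card_fun, card_subtype_ne₂ (by simp), Fintype.card_sum, Fintype.card_fin,
      Fintype.card_fin]
    ring_nf
  rw [Finset.sum_congr rfl (fun i _ => h1 i), Finset.sum_congr rfl (fun ij _ => h2 ij)]
  simp only [Finset.sum_const, Finset.card_univ, smul_eq_mul, Fintype.card_sum,
    Fintype.card_prod, Fintype.card_fin]
  ring

end Encode

end WExtreme

/-- For a fixed time period `t` and fixed stock levels `s''` (before) and
`s'` (after), the set of vectors `(x*_{·,t}, y*_{·,t})` arising from extreme points of
`P = conv(Q)` has cardinality at most `2V·3^(2V-1) + V²·3^(2V-2)`. -/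
theorem card_extreme_purchase_sales_le {V T : ℕ} (hV : 0 < V) (s0 : ℝ)
    (Ls Us : Fin T → ℝ) (Lx Ux Ly Uy : Fin V → Fin T → ℝ)
    (C : Finset (CompCon V T))
    (hLs : ∀ t, 0 ≤ Ls t) (hsLU : ∀ t, Ls t ≤ Us t)
    (hLx : ∀ v t, 0 ≤ Lx v t) (hxLU : ∀ v t, Lx v t ≤ Ux v t)
    (hLy : ∀ v t, 0 ≤ Ly v t) (hyLU : ∀ v t, Ly v t ≤ Uy v t)
    (hC : ∀ c ∈ C, ValidCompCon Lx Ux Ly Uy c)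
    (t : Fin T) (s' s'' : ℝ) :
    ({ xy : (Fin V → ℝ) × (Fin V → ℝ) |
        ∃ p ∈ Set.extremePoints ℝ (convexHull ℝ (Qset s0 Ls Us Lx Ux Ly Uy C)),
          WPoint.s p t = s' ∧ prevStock s0 (WPoint.s p) t = s'' ∧
          xy = (fun v => WPoint.x p v t, fun v => WPoint.y p v t) }).ncard ≤
      2 * V * 3 ^ (2 * V - 1) + V ^ 2 * 3 ^ (2 * V - 2) := by
  classical
  set lo : Fin V ⊕ Fin V → ℝ := Sum.elim (fun v => Lx v t) (fun v => Ly v t) with hlo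
  set hi : Fin V ⊕ Fin V → ℝ := Sum.elim (fun v => Ux v t) (fun v => Uy v t) with hhi
  set Φ : (Fin V → ℝ) × (Fin V → ℝ) → WExtreme.EType V :=
    fun ab => WExtreme.encode hV lo hi (Sum.elim ab.1 ab.2) with hPhi
  have hinj : Set.InjOn Φ
      { xy : (Fin V → ℝ) × (Fin V → ℝ) |
        ∃ p ∈ Set.extremePoints ℝ (convexHull ℝ (Qset s0 Ls Us Lx Ux Ly Uy C)),
          WPoint.s p t = s' ∧ prevStock s0 (WPoint.s p) t = s'' ∧
          xy = (fun v => WPoint.x p v t, fun v => WPoint.y p v t) } := by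
    rintro ⟨a, b⟩ ⟨p, hext, hs', hs'', hab⟩ ⟨a', b'⟩ ⟨p', hext', ht', ht'', hab'⟩ heq
    obtain ⟨ha, hb⟩ := Prod.mk.inj hab
    obtain ⟨ha', hb'⟩ := Prod.mk.inj hab'
    subst ha hb ha' hb'
    have hQmem : p ∈ Qset s0 Ls Us Lx Ux Ly Uy C := extremePoints_convexHull_subset hext
    have hQmem' : p' ∈ Qset s0 Ls Us Lx Ux Ly Uy C := extremePoints_convexHull_subset hext'
    have hfX : ∀ (q : WPoint V T) u,
        WExtreme.IsFreeC lo hi (Sum.elim (fun v => q.x v t) (fun v => q.y v t)) (.inl u) ↔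
          WExtreme.FreeX Lx Ux q t u := fun q u => Iff.rfl
    have hfY : ∀ (q : WPoint V T) u,
        WExtreme.IsFreeC lo hi (Sum.elim (fun v => q.x v t) (fun v => q.y v t)) (.inr u) ↔
          WExtreme.FreeY Ly Uy q t u := fun q u => Iff.rfl
    have hbal : ∀ (q : WPoint V T), q ∈ Qset s0 Ls Us Lx Ux Ly Uy C →
        q.s t = s' → prevStock s0 q.s t = s'' →
        s' = s'' - ∑ v, Sum.elim (fun v => q.x v t) (fun v => q.y v t) (Sum.inr v)
          + ∑ v, Sum.elim (fun v => q.x v t) (fun v => q.y v t) (Sum.inl v) := by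
      intro q hq hq1 hq2
      have := hq.1 t
      rw [hq1, hq2] at this
      simpa using this
    have key := WExtreme.encode_inj hV lo hi s' s''
      (c := Sum.elim (fun v => p.x v t) (fun v => p.y v t))
      (c' := Sum.elim (fun v => p'.x v t) (fun v => p'.y v t))
      (fun u u' h h' => by
        by_contra hne
        exact WExtreme.not_two_freeX hext hQmem hC hne ((hfX p u).mp h) ((hfX p u').mp h'))
      (fun u u' h h' => by
        by_contra hne
        exact WExtreme.not_two_freeY hext hQmem hC hne ((hfY p u).mp h) ((hfY p u').mp h'))
      (fun h1 h2 => by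
        obtain ⟨u1, h1⟩ := h1
        obtain ⟨u2, h2⟩ := h2
        have := WExtreme.freeXY_tight hext hQmem hC ((hfX p u1).mp h1) ((hfY p u2).mp h2)
        simpa [hs''] using this)
      (hbal p hQmem hs' hs'')
      (fun u u' h h' => by
        by_contra hne
        exact WExtreme.not_two_freeX hext' hQmem' hC hne ((hfX p' u).mp h) ((hfX p' u').mp h'))
      (fun u u' h h' => by
        by_contra hne
        exact WExtreme.not_two_freeY hext' hQmem' hC hne ((hfY p' u).mp h) ((hfY p' u').mp h'))
      (fun h1 h2 => by
        obtain ⟨u1, h1⟩ := h1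
        obtain ⟨u2, h2⟩ := h2
        have := WExtreme.freeXY_tight hext' hQmem' hC ((hfX p' u1).mp h1) ((hfY p' u2).mp h2)
        simpa [ht''] using this)
      (hbal p' hQmem' ht' ht'')
      heq
    refine Prod.ext ?_ ?_
    · exact funext fun v => congrFun key (Sum.inl v)
    · exact funext fun v => congrFun key (Sum.inr v)
  rw [← Set.ncard_image_of_injOn hinj]
  refine le_trans (Set.ncard_le_ncard (Set.subset_univ _) Set.finite_univ) ?_
  rw [Set.ncard_univ, Nat.card_eq_fintype_card, WExtreme.card_EType]
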